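/- For every n ≥ 1, the number of survivors of the first n stages of the model sieve that are ≤ ∏_{i=1}^{n} (x i) equals ∏_{i=1}^{n} (x i − 1); that is, #{k : ℕ | f n k ≤ ∏_{i=1}^{n} x i} = ∏_{i=1}^{n} (x i − 1). -/

import Mathlib

/-- `gx x` is the 0-indexed strictly increasing enumeration of `{k : ℕ | k % x ≠ 1}`. -/
noncomputable def gx (x : ℕ) : ℕ → ℕ := Nat.nth (fun k => k % x ≠ 1)

/-- `modelF n` is the 0-indexed strictly increasing enumeration of the integers surviving
`n` stages of the model sieve:  `modelF 0 k = k + 1` and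
`modelF (n+1) k = modelF n (gx (modelX (n+1)) k)` where `modelX (n+1) = modelF n 1`. -/
noncomputable def modelF : ℕ → ℕ → ℕ
  | 0, k => k + 1
  | n + 1, k => modelF n (gx (modelF n 1) k)

/-- `modelX n` is the `n`-th model prime (`modelX 1 = 2, modelX 2 = 3, modelX 3 = 5, ...`). -/
noncomputable def modelX (n : ℕ) : ℕ := modelF (n - 1) 1

/-- `Lcount n t` is the number of survivors of the first `n` stages of the model sieve
that are `≤ t`. -/
noncomputable def Lcount (n t : ℕ) : ℕ := Set.ncard {k : ℕ | modelF n k ≤ t}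

/-- In any window of length `x`, exactly `x - 1` integers are `≢ 1 mod x`. -/
lemma count_window (x m : ℕ) (hx : 2 ≤ x) :
    Nat.count (fun k => (m + k) % x ≠ 1) x = x - 1 := by
  classical
  rw [Nat.count_eq_card_filter_range]
  have hrx : m % x < x := Nat.mod_lt _ (by omega)
  have hmod : ∀ k, k < x → (m + k) % x = (m % x + k) % x := by
    intro k hk
    rw [Nat.add_mod, Nat.mod_eq_of_lt hk]
  have hcompl : (Finset.range x).filter (fun k => ¬ ((m + k) % x ≠ 1)) =
      {(x + 1 - m % x) % x} := by
    ext k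
    simp only [Finset.mem_filter, Finset.mem_range, Finset.mem_singleton, not_not]
    have hk0 : ((x + 1 - m % x) % x = 1 - m % x ∧ m % x ≤ 1) ∨
        ((x + 1 - m % x) % x = x + 1 - m % x ∧ 2 ≤ m % x) := by
      rcases le_or_gt (m % x) 1 with h | h
      · left
        refine ⟨?_, h⟩
        have h1 : x + 1 - m % x = x + (1 - m % x) := by omega
        rw [h1, Nat.add_mod_left, Nat.mod_eq_of_lt (by omega)]
      · right
        exact ⟨Nat.mod_eq_of_lt (by omega), h⟩
    constructor
    · rintro ⟨hkx, hk1⟩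
      rw [hmod k hkx] at hk1
      have h2 : m % x + k < x ∧ m % x + k = 1 ∨
          (x ≤ m % x + k ∧ m % x + k - x = 1) := by
        rcases lt_or_ge (m % x + k) x with h | h
        · left
          exact ⟨h, by rwa [Nat.mod_eq_of_lt h] at hk1⟩
        · right
          refine ⟨h, ?_⟩
          rw [Nat.mod_eq_sub_mod h, Nat.mod_eq_of_lt (by omega)] at hk1
          exact hk1
      omega
    · intro hk
      subst hk
      rcases hk0 with ⟨he, h1⟩ | ⟨he, h1⟩
      · rw [he]
        refine ⟨by omega, ?_⟩
        rw [hmod _ (by omega)]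
        have : m % x + (1 - m % x) = 1 := by omega
        rw [this, Nat.mod_eq_of_lt (by omega)]
      · rw [he]
        refine ⟨by omega, ?_⟩
        rw [hmod _ (by omega)]
        have : m % x + (x + 1 - m % x) = x + 1 := by omega
        rw [this, Nat.add_mod_left, Nat.mod_eq_of_lt (by omega)]
  have := Finset.card_filter_add_card_filter_not
    (s := Finset.range x) (p := fun k => (m + k) % x ≠ 1)
  rw [hcompl] at this
  simp only [Finset.card_singleton, Finset.card_range] at this
  omega

lemma gx_infinite (x : ℕ) : (setOf fun k => k % x ≠ 1).Infinite := by
  match x with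
  | 0 =>
    have : (setOf fun k : ℕ => k % 0 ≠ 1) = {(1 : ℕ)}ᶜ := by
      ext k; simp [Nat.mod_zero]; exact Iff.rfl
    rw [this]
    exact (Set.finite_singleton 1).infinite_compl
  | 1 =>
    have : (setOf fun k : ℕ => k % 1 ≠ 1) = Set.univ := by
      ext k; simp [Nat.mod_one]; exact trivial
    rw [this]; exact Set.infinite_univ
  | (m + 2) =>
    exact Set.infinite_of_injective_forall_mem (f := fun j : ℕ => (m + 2) * j)
      (s := setOf fun k => k % (m + 2) ≠ 1)
      (fun a b hab => Nat.eq_of_mul_eq_mul_left (by omega) hab)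
      (fun j => by show (m + 2) * j % (m + 2) ≠ 1; simp [Nat.mul_mod_right])

lemma count_period (x : ℕ) (hx : 2 ≤ x) (m : ℕ) :
    Nat.count (fun k => k % x ≠ 1) (m + x) =
      Nat.count (fun k => k % x ≠ 1) m + (x - 1) := by
  rw [Nat.count_add, count_window x m hx]

lemma gx_strictMono (x : ℕ) : StrictMono (gx x) :=
  Nat.nth_strictMono (gx_infinite x)

lemma gx_zero (x : ℕ) : gx x 0 = 0 :=
  Nat.nth_zero_of_zero (by simp)

lemma gx_add (x : ℕ) (hx : 2 ≤ x) (k : ℕ) :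
    gx x (k + (x - 1)) = gx x k + x := by
  have hinf := gx_infinite x
  have hpm : (Nat.nth (fun k => k % x ≠ 1) k) % x ≠ 1 := Nat.nth_mem_of_infinite hinf k
  have hc := Nat.count_nth_of_infinite hinf k
  have hp2 : (Nat.nth (fun k => k % x ≠ 1) k + x) % x ≠ 1 := by
    rwa [Nat.add_mod_right]
  have := Nat.nth_count (p := fun k => k % x ≠ 1) hp2
  unfold gx
  rwa [count_period x hx _, hc] at this

lemma gx_add_mul (x : ℕ) (hx : 2 ≤ x) (k j : ℕ) :
    gx x (k + (x - 1) * j) = gx x k + x * j := by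
  induction j with
  | zero => simp
  | succ j ih =>
    have : k + (x - 1) * (j + 1) = (k + (x - 1) * j) + (x - 1) := by ring
    rw [this, gx_add x hx, ih]
    ring

lemma modelF_strictMono (n : ℕ) : StrictMono (modelF n) := by
  induction n with
  | zero => intro a b h; simpa [modelF] using h
  | succ n ih => exact fun a b h => ih (gx_strictMono _ h)

lemma modelF_zero (n : ℕ) : modelF n 0 = 1 := by
  induction n with
  | zero => rfl
  | succ n ih => simp [modelF, gx_zero, ih]

lemma modelF_one_ge (n : ℕ) : 2 ≤ modelF n 1 := by
  have := modelF_strictMono n (show 0 < 1 by norm_num)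
  rw [modelF_zero] at this
  omega

lemma modelX_ge (i : ℕ) : 2 ≤ modelX i := modelF_one_ge _

lemma modelF_period (n : ℕ) (k : ℕ) :
    modelF n (k + ∏ i ∈ Finset.Icc 1 n, (modelX i - 1)) =
      modelF n k + ∏ i ∈ Finset.Icc 1 n, modelX i := by
  induction n generalizing k with
  | zero => simp [modelF]
  | succ n ih =>
    have ihmul : ∀ j t, modelF n (j + (∏ i ∈ Finset.Icc 1 n, (modelX i - 1)) * t) =
        modelF n j + (∏ i ∈ Finset.Icc 1 n, modelX i) * t := by
      intro j t
      induction t with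
      | zero => simp
      | succ t iht =>
        have h1 : j + (∏ i ∈ Finset.Icc 1 n, (modelX i - 1)) * (t + 1) =
            (j + (∏ i ∈ Finset.Icc 1 n, (modelX i - 1)) * t) +
              ∏ i ∈ Finset.Icc 1 n, (modelX i - 1) := by ring
        rw [h1, ih, iht]
        ring
    have hX : modelX (n + 1) = modelF n 1 := by simp [modelX]
    have hx2 : 2 ≤ modelF n 1 := modelF_one_ge n
    rw [Finset.prod_Icc_succ_top (Nat.le_add_left 1 n),
        Finset.prod_Icc_succ_top (Nat.le_add_left 1 n)]
    show modelF n (gx (modelF n 1) _) = modelF n (gx (modelF n 1) k) + _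
    rw [hX]
    have h2 : k + (∏ i ∈ Finset.Icc 1 n, (modelX i - 1)) * (modelF n 1 - 1) =
        k + (modelF n 1 - 1) * ∏ i ∈ Finset.Icc 1 n, (modelX i - 1) := by ring
    rw [h2, gx_add_mul _ hx2, Nat.mul_comm (modelF n 1), ihmul]

/-- The number of survivors of the first `n` stages of the model sieve that are
`≤ ∏_{i=1}^{n} x i` equals `∏_{i=1}^{n} (x i - 1)`. -/
theorem model_sieve_count_in_period (n : ℕ) (hn : 1 ≤ n) :
    Set.ncard {k : ℕ | modelF n k ≤ ∏ i ∈ Finset.Icc 1 n, modelX i} =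
      ∏ i ∈ Finset.Icc 1 n, (modelX i - 1) := by
  set P := ∏ i ∈ Finset.Icc 1 n, modelX i with hP
  set Q := ∏ i ∈ Finset.Icc 1 n, (modelX i - 1) with hQ
  have hFQ : modelF n Q = P + 1 := by
    have := modelF_period n 0
    rw [zero_add, modelF_zero] at this
    simp only [← hP, ← hQ] at this
    omega
  have hset : {k : ℕ | modelF n k ≤ P} = ↑(Finset.range Q) := by
    ext k
    simp only [Set.mem_setOf_eq, Finset.coe_range, Set.mem_Iio]
    constructor
    · intro h
      by_contra hk
      push_neg at hk
      have : modelF n Q ≤ modelF n k := (modelF_strictMono n).monotone hk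
      omega
    · intro h
      have : modelF n k < modelF n Q := modelF_strictMono n h
      omega
  rw [hset]
  simp only [Finset.coe_range]
  rw [← Finset.coe_range, Set.ncard_coe_finset, Finset.card_range]
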